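/- With g : Γ → α+1 defined as in the rank-function construction (g(⟨⟩) = α; successor values decrease by one; at limit values g(η) = δ one sets g(η⌢⟨ℓ⟩) = ρ_δ(ℓ); after reaching 0 one resets to α), along every infinite branch η ∈ lim(Γ) the value α is attained infinitely often: for every n there exists m ≥ n with g(η↾m) = α. Equivalently, the fronts A_n (nodes where g equals α for the n-th time) satisfy: every branch of Γ meets A_n for every n, and a node of A_{n+1} properly extends a node of A_n. -/

import Mathlib

def res (x : ℕ → ℕ) (m : ℕ) : List ℕ := List.ofFn fun i : Fin m => x i

def Aset (Γ : Set (List ℕ)) (g : List ℕ → Ordinal) (α : Ordinal) (n : ℕ) :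
    Set (List ℕ) :=
  {η | η ∈ Γ ∧ g η = α ∧ {ℓ : ℕ | ℓ < η.length ∧ g (η.take ℓ) = α}.ncard = n}

theorem res_succ (x : ℕ → ℕ) (m : ℕ) : res x (m+1) = res x m ++ [x m] := by
  rw [res, List.ofFn_succ', List.concat_eq_append]
  simp only [Fin.coe_castSucc, Fin.val_last]
  rfl

theorem res_take (x : ℕ → ℕ) {k m : ℕ} (h : k ≤ m) : (res x m).take k = res x k := by
  apply List.ext_getElem <;> simp [res, h] <;> omega

theorem stmt10 (α : Ordinal) (hα : Order.IsSuccLimit α)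
    (ρ : Ordinal → ℕ → Ordinal)
    (hρ : ∀ δ ≤ α, Order.IsSuccLimit δ →
      StrictMono (ρ δ) ∧ (∀ n, ρ δ n < δ) ∧ ∀ β < δ, ∃ n, β < ρ δ n)
    (Γ : Set (List ℕ)) (hnil : ([] : List ℕ) ∈ Γ)
    (hclosed : ∀ σ τ : List ℕ, σ <+: τ → τ ∈ Γ → σ ∈ Γ)
    (hsplit : ∀ η ∈ Γ, {m : ℕ | η ++ [m] ∈ Γ}.Infinite)
    (g : List ℕ → Ordinal)
    (hg0 : g [] = α)
    (hgsucc : ∀ η ∈ Γ, ∀ ℓ : ℕ, η ++ [ℓ] ∈ Γ →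
      ∀ β, g η = β + 1 → g (η ++ [ℓ]) = β)
    (hglim : ∀ η ∈ Γ, ∀ ℓ : ℕ, η ++ [ℓ] ∈ Γ →
      Order.IsSuccLimit (g η) → g (η ++ [ℓ]) = ρ (g η) ℓ)
    (hgzero : ∀ η ∈ Γ, ∀ ℓ : ℕ, η ++ [ℓ] ∈ Γ → g η = 0 → g (η ++ [ℓ]) = α) :
    (∀ x : ℕ → ℕ, (∀ m : ℕ, res x m ∈ Γ) →
      ∀ n : ℕ, ∃ m : ℕ, n ≤ m ∧ g (res x m) = α) ∧
    (∀ x : ℕ → ℕ, (∀ m : ℕ, res x m ∈ Γ) →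
      ∀ n : ℕ, ∃ m : ℕ, res x m ∈ Aset Γ g α n) ∧
    (∀ n : ℕ, ∀ η ∈ Aset Γ g α (n + 1),
      ∃ ν ∈ Aset Γ g α n, ν <+: η ∧ ν ≠ η) := by
  classical
  have hres0 : ∀ x : ℕ → ℕ, res x 0 = [] := fun x => rfl
  -- one-step behaviour of g
  have step : ∀ η ∈ Γ, ∀ ℓ : ℕ, η ++ [ℓ] ∈ Γ → g η ≤ α →
      (g η = 0 ∧ g (η ++ [ℓ]) = α) ∨ g (η ++ [ℓ]) < g η := by
    intro η hη ℓ hηℓ hle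
    rcases Ordinal.zero_or_succ_or_isSuccLimit (g η) with h0 | ⟨β, hβ⟩ | hlim
    · exact Or.inl ⟨h0, hgzero η hη ℓ hηℓ h0⟩
    · refine Or.inr ?_
      rw [hgsucc η hη ℓ hηℓ β (by rw [← hβ, Ordinal.add_one_eq_succ]), ← hβ]
      exact Order.lt_succ β
    · refine Or.inr ?_
      rw [hglim η hη ℓ hηℓ hlim]
      exact (hρ (g η) hle hlim).2.1 ℓ
  -- invariant
  have hle : ∀ x : ℕ → ℕ, (∀ m, res x m ∈ Γ) → ∀ m, g (res x m) ≤ α := by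
    intro x hx m
    induction m with
    | zero => rw [hres0, hg0]
    | succ m ih =>
      rcases step (res x m) (hx m) (x m) (by rw [← res_succ]; exact hx (m+1)) ih with
        ⟨_, hA⟩ | hlt
      · rw [res_succ, hA]
      · rw [res_succ]; exact le_trans hlt.le ih
  -- α is attained beyond any point
  have αattain : ∀ x : ℕ → ℕ, (∀ m, res x m ∈ Γ) →
      ∀ m, ∃ m', m ≤ m' ∧ g (res x m') = α := by
    intro x hx
    suffices h : ∀ β m, g (res x m) = β → ∃ m', m ≤ m' ∧ g (res x m') = α by
      intro m; exact h _ m rfl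
    intro β
    induction β using Ordinal.induction with
    | h β ih =>
      intro m hm
      by_cases hA : g (res x m) = α
      · exact ⟨m, le_refl m, hA⟩
      rcases step (res x m) (hx m) (x m) (by rw [← res_succ]; exact hx (m+1)) (hle x hx m)
        with ⟨_, hA'⟩ | hlt
      · exact ⟨m + 1, Nat.le_succ m, by rw [res_succ]; exact hA'⟩
      · have hlt' : g (res x (m+1)) < β := by rw [res_succ, ← hm]; exact hlt
        obtain ⟨m', hm', h'⟩ := ih _ hlt' (m+1) rfl
        exact ⟨m', le_trans (Nat.le_succ m) hm', h'⟩
  refine ⟨fun x hx n => αattain x hx n, ?_, ?_⟩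
  · -- second claim
    intro x hx n
    set p : ℕ → Prop := fun m => g (res x m) = α with hp
    have hinf : (setOf p).Infinite := by
      apply Set.infinite_of_not_bddAbove
      rintro ⟨b, hb⟩
      obtain ⟨m', hm', hpm'⟩ := αattain x hx (b + 1)
      exact absurd (hb hpm') (by omega)
    refine ⟨Nat.nth p n, hx _, Nat.nth_mem_of_infinite hinf n, ?_⟩
    have hcount := Nat.count_nth_of_infinite (p := p) hinf n
    rw [Nat.count_eq_card_filter_range] at hcount
    have hset : {ℓ : ℕ | ℓ < (res x (Nat.nth p n)).length ∧
        g ((res x (Nat.nth p n)).take ℓ) = α} =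
        ↑((Finset.range (Nat.nth p n)).filter p) := by
      ext ℓ
      simp only [Set.mem_setOf_eq, Finset.coe_filter, Finset.mem_range, res,
        List.length_ofFn]
      constructor
      · rintro ⟨h1, h2⟩
        rw [show (List.ofFn fun i : Fin (Nat.nth p n) => x i) = res x (Nat.nth p n) from rfl,
          res_take x h1.le] at h2
        exact ⟨h1, h2⟩
      · rintro ⟨h1, h2⟩
        refine ⟨h1, ?_⟩
        rw [show (List.ofFn fun i : Fin (Nat.nth p n) => x i) = res x (Nat.nth p n) from rfl,
          res_take x h1.le]
        exact h2
    rw [hset, Set.ncard_coe_finset]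
    exact hcount
  · -- third claim
    intro n η hη
    obtain ⟨hηΓ, hηα, hcard⟩ := hη
    set q : ℕ → Prop := fun ℓ => g (η.take ℓ) = α with hq
    set F : Finset ℕ := (Finset.range η.length).filter q with hF
    have hSF : {ℓ : ℕ | ℓ < η.length ∧ g (η.take ℓ) = α} = ↑F := by
      ext ℓ; simp [hF, hq]
    rw [hSF, Set.ncard_coe_finset] at hcard
    have hne : F.Nonempty := Finset.card_pos.mp (by omega)
    set m : ℕ := F.max' hne with hm
    have hmF : m ∈ F := F.max'_mem hne
    have hmlen : m < η.length := (Finset.mem_filter.mp hmF).1 |> Finset.mem_range.mp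
    have hmq : g (η.take m) = α := (Finset.mem_filter.mp hmF).2
    refine ⟨η.take m, ⟨hclosed _ η (List.take_prefix m η) hηΓ, hmq, ?_⟩,
      List.take_prefix m η, ?_⟩
    · have hlen : (η.take m).length = m := by simp [List.length_take]; omega
      have hset2 : {ℓ : ℕ | ℓ < (η.take m).length ∧ g ((η.take m).take ℓ) = α} =
          ↑(F.erase m) := by
        ext ℓ
        simp only [Set.mem_setOf_eq, hlen, Finset.coe_erase, Set.mem_diff,
          Finset.mem_coe, Set.mem_singleton_iff]
        constructor
        · rintro ⟨h1, h2⟩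
          rw [List.take_take, min_eq_left h1.le] at h2
          exact ⟨Finset.mem_filter.mpr ⟨Finset.mem_range.mpr (h1.trans hmlen), h2⟩, by omega⟩
        · rintro ⟨h1, h2⟩
          have hle' : ℓ ≤ m := F.le_max' ℓ h1
          have h1' : ℓ < m := lt_of_le_of_ne hle' h2
          refine ⟨h1', ?_⟩
          rw [List.take_take, min_eq_left h1'.le]
          exact (Finset.mem_filter.mp h1).2
      rw [hset2, Set.ncard_coe_finset, Finset.card_erase_of_mem hmF, hcard]
      omega
    · intro heq
      have := congrArg List.length heq
      simp [List.length_take] at this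
      omega
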